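/- If {v1, v2} ∈ D_u and {v3, v4} ∈ D_u are double-vertex dominators of u such that {v3, v4} does not dominate v1 and {v1, v2} does not dominate v4, then {v3, v4} dominates v2 and {v1, v2} dominates v3. -/

import Mathlib

/-- A nonempty directed path `p` from `a` to `b` in the graph with edge relation `E`. -/
def IsPath {V : Type*} (E : V → V → Prop) (p : List V) (a b : V) : Prop :=
  p ≠ [] ∧ p.head? = some a ∧ p.getLast? = some b ∧ p.Chain' E

/-- `A` dominates `B` with respect to `root`: every path from a vertex of `B` to `root`
contains a vertex of `A`. -/
def Dominates {V : Type*} (E : V → V → Prop) (root : V) (A B : Set V) : Prop :=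
  ∀ b ∈ B, ∀ p : List V, IsPath E p b root → ∃ a ∈ A, a ∈ p

/-- `A` is a dominator of `B`: it dominates `B` and no proper subset `A \ {v}` does. -/
def IsDominator {V : Type*} (E : V → V → Prop) (root : V) (A B : Set V) : Prop :=
  Dominates E root A B ∧ ∀ v ∈ A, ¬ Dominates E root (A \ {v}) B

/-- `{v, w}` is a double-vertex dominator of `u`. -/
def DoubleDom {V : Type*} (E : V → V → Prop) (root : V) (u v w : V) : Prop :=
  v ≠ w ∧ Dominates E root {v, w} {u} ∧
    ¬ Dominates E root {v} {u} ∧ ¬ Dominates E root {w} {u}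

/-- The edge relation `E` is acyclic. -/
def Acyclic {V : Type*} (E : V → V → Prop) : Prop :=
  ∀ a b, E a b → ¬ Relation.ReflTransGen E b a

lemma IsPath.start_mem {V : Type*} {E : V → V → Prop} {p : List V} {a b : V}
    (h : IsPath E p a b) : a ∈ p := List.mem_of_mem_head? h.2.1

/-- split off the first element of a list belonging to `T` -/
lemma split_first {V : Type*} (T : Set V) :
    ∀ (p : List V), (∃ x ∈ p, x ∈ T) →
      ∃ q x r, p = q ++ x :: r ∧ x ∈ T ∧ ∀ y ∈ q, y ∉ T := by
  intro p
  induction p with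
  | nil => rintro ⟨x, hx, -⟩; simp at hx
  | cons a p ih =>
    intro h
    by_cases ha : a ∈ T
    · exact ⟨[], a, p, rfl, ha, by simp⟩
    · obtain ⟨x, hx, hxT⟩ := h
      rcases List.mem_cons.mp hx with rfl | hx
      · exact absurd hxT ha
      · obtain ⟨q, x, r, hp, hxT, hq⟩ := ih ⟨x, hx, hxT⟩
        refine ⟨a :: q, x, r, by rw [hp]; rfl, hxT, ?_⟩
        intro y hy
        rcases List.mem_cons.mp hy with rfl | hy
        · exact ha
        · exact hq y hy

/-- a prefix `q ++ [x]` of a path is a path -/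
lemma prefix_path {V : Type*} {E : V → V → Prop} {p q r : List V} {a b x : V}
    (hp : IsPath E p a b) (heq : p = q ++ x :: r) : IsPath E (q ++ [x]) a x := by
  obtain ⟨hne, hhead, hlast, hchain⟩ := hp
  refine ⟨by simp, ?_, ?_, ?_⟩
  · rw [heq] at hhead
    rw [← hhead]
    cases q with
    | nil => simp
    | cons c q => simp
  · simp
  · have : p = (q ++ [x]) ++ r := by rw [heq]; simp
    rw [this] at hchain
    exact ((List.isChain_append).mp hchain).1

/-- concatenating paths -/
lemma path_trans {V : Type*} {E : V → V → Prop} {p q : List V} {a m b : V}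
    (hp : IsPath E p a m) (hq : IsPath E q m b) :
    ∃ s : List V, IsPath E s a b ∧ ∀ x ∈ s, x ∈ p ∨ x ∈ q := by
  obtain ⟨hpne, hphead, hplast, hpchain⟩ := hp
  obtain ⟨hqne, hqhead, hqlast, hqchain⟩ := hq
  refine ⟨p ++ q.tail, ⟨by simp [hpne], ?_, ?_, ?_⟩, ?_⟩
  · rw [List.head?_append_of_ne_nil _ hpne]; exact hphead
  · by_cases htail : q.tail = []
    · obtain ⟨c, rfl⟩ : ∃ c, q = [c] := by
        cases q with
        | nil => exact absurd rfl hqne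
        | cons c t => exact ⟨c, by simp_all⟩
      simp at hqhead hqlast
      simp [htail, hplast, hphead, hqhead ▸ hqlast]
    · rw [List.getLast?_append_of_ne_nil _ htail, ← hqlast]
      cases q with
      | nil => exact absurd rfl hqne
      | cons c t =>
        cases t with
        | nil => simp at htail
        | cons d t' => exact List.getLast?_cons_cons.symm
  · refine List.isChain_append.mpr ?_
    refine ⟨hpchain, hqchain.tail, ?_⟩
    intro y hy z hz
    obtain ⟨c, t, rfl⟩ : ∃ c t, q = c :: t := by
      cases q with
      | nil => exact absurd rfl hqne
      | cons c t => exact ⟨c, t, rfl⟩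
    simp at hqhead
    subst hqhead
    rw [hplast] at hy
    cases hy
    cases t with
    | nil => simp at hz
    | cons d t' =>
      simp at hz
      cases hz
      exact (List.isChain_cons_cons.mp hqchain).1
  · intro x hx
    rcases List.mem_append.mp hx with h | h
    · exact Or.inl h
    · exact Or.inr (List.mem_of_mem_tail h)

lemma key {V : Type*} (E : V → V → Prop) (root u a b c d : V)
    (hab : Dominates E root {a, b} {u})
    (hcd : Dominates E root {c, d} {u})
    (hc : ¬ Dominates E root {c} {u})
    (Ra : List V) (hRa : IsPath E Ra a root) (hRa' : ∀ x ∈ Ra, x ∉ ({c, d} : Set V))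
    (Rd : List V) (hRd : IsPath E Rd d root) (hRd' : ∀ x ∈ Rd, x ∉ ({a, b} : Set V)) :
    Dominates E root {c, d} {b} := by
  intro b' hb' Q hQ
  have hb2 : b = b' := (Set.mem_singleton_iff.mp hb').symm
  subst hb2
  by_contra hcon
  push_neg at hcon
  have hQcd : ∀ x ∈ Q, x ∉ ({c, d} : Set V) := by
    intro x hx hxT
    exact hcon x hxT hx
  -- path from u to root avoiding c
  rw [Dominates] at hc
  push_neg at hc
  obtain ⟨u', hu', S, hS, hSc⟩ := hc
  have hu2 : u = u' := (Set.mem_singleton_iff.mp hu').symm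
  subst hu2
  have hSc' : ∀ x ∈ S, x ≠ c := fun x hx hxc => hSc c rfl (hxc ▸ hx)
  -- S contains an element of {a, b, d}
  have hmem : ∃ x ∈ S, x ∈ ({a, b, d} : Set V) := by
    obtain ⟨x, hx1, hx2⟩ := hab u rfl S hS
    refine ⟨x, hx2, ?_⟩
    simp only [Set.mem_insert_iff, Set.mem_singleton_iff] at hx1 ⊢
    tauto
  obtain ⟨q, x, r, heq, hxT, hq⟩ := split_first _ S hmem
  have hpre : IsPath E (q ++ [x]) u x := prefix_path hS heq
  have hqS : ∀ y ∈ q, y ∈ S := by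
    intro y hy; rw [heq]; exact List.mem_append_left _ hy
  have hqT : ∀ y ∈ q, y ≠ a ∧ y ≠ b ∧ y ≠ d := by
    intro y hy
    have := hq y hy
    simp only [Set.mem_insert_iff, Set.mem_singleton_iff] at this
    tauto
  simp only [Set.mem_insert_iff, Set.mem_singleton_iff] at hxT
  rcases hxT with rfl | rfl | rfl
  -- x = a : compose with Ra, avoiding {c, d}, contradicting hcd
  · obtain ⟨s, hs, hmem'⟩ := path_trans hpre hRa
    obtain ⟨z, hz1, hz2⟩ := hcd u rfl s hs
    simp only [Set.mem_insert_iff, Set.mem_singleton_iff] at hz1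
    rcases hmem' z hz2 with h | h
    · rcases List.mem_append.mp h with h | h
      · rcases hz1 with rfl | rfl
        · exact hSc' z (hqS z h) rfl
        · exact (hqT z h).2.2 rfl
      · simp at h
        subst h
        exact hRa' z hRa.start_mem (by simpa using hz1)
    · exact hRa' z h (by simpa using hz1)
  -- x = b : compose with Q, avoiding {c, d}, contradicting hcd
  · obtain ⟨s, hs, hmem'⟩ := path_trans hpre hQ
    obtain ⟨z, hz1, hz2⟩ := hcd u rfl s hs
    simp only [Set.mem_insert_iff, Set.mem_singleton_iff] at hz1
    rcases hmem' z hz2 with h | h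
    · rcases List.mem_append.mp h with h | h
      · rcases hz1 with rfl | rfl
        · exact hSc' z (hqS z h) rfl
        · exact (hqT z h).2.2 rfl
      · simp at h
        subst h
        exact hQcd z hQ.start_mem (by simpa using hz1)
    · exact hQcd z h (by simpa using hz1)
  -- x = d : compose with Rd, avoiding {a, b}, contradicting hab
  · obtain ⟨s, hs, hmem'⟩ := path_trans hpre hRd
    obtain ⟨z, hz1, hz2⟩ := hab u rfl s hs
    simp only [Set.mem_insert_iff, Set.mem_singleton_iff] at hz1
    rcases hmem' z hz2 with h | h
    · rcases List.mem_append.mp h with h | h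
      · rcases hz1 with rfl | rfl
        · exact (hqT z h).1 rfl
        · exact (hqT z h).2.1 rfl
      · simp at h
        subst h
        exact hRd' z hRd.start_mem (by simpa using hz1)
    · exact hRd' z h (by simpa using hz1)


set_option linter.unusedVariables false in
theorem doubleDom_cross_dominates {V : Type*} [Fintype V] (E : V → V → Prop) (root : V)
    (hacyc : Acyclic E) (u v₁ v₂ v₃ v₄ : V)
    (h12 : DoubleDom E root u v₁ v₂) (h34 : DoubleDom E root u v₃ v₄)
    (h1 : ¬ Dominates E root {v₃, v₄} {v₁})
    (h4 : ¬ Dominates E root {v₁, v₂} {v₄}) :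
    Dominates E root {v₃, v₄} {v₂} ∧ Dominates E root {v₁, v₂} {v₃} := by
  obtain ⟨-, hab, hna, hnb⟩ := h12
  obtain ⟨-, hcd, hnc, hnd⟩ := h34
  rw [Dominates] at h1 h4
  push_neg at h1 h4
  obtain ⟨w1, hw1, R1, hR1, hR1'⟩ := h1
  obtain ⟨w4, hw4, R4, hR4, hR4'⟩ := h4
  have hw1' : v₁ = w1 := (Set.mem_singleton_iff.mp hw1).symm
  have hw4' : v₄ = w4 := (Set.mem_singleton_iff.mp hw4).symm
  subst hw1' hw4'
  have hR1'' : ∀ x ∈ R1, x ∉ ({v₃, v₄} : Set V) := fun x hx hxm => hR1' x hxm hx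
  have hR4'' : ∀ x ∈ R4, x ∉ ({v₁, v₂} : Set V) := fun x hx hxm => hR4' x hxm hx
  constructor
  · exact key E root u v₁ v₂ v₃ v₄ hab hcd hnc R1 hR1 hR1'' R4 hR4 hR4''
  · have hab' : Dominates E root {v₄, v₃} {u} := by rwa [Set.pair_comm]
    have hcd' : Dominates E root {v₂, v₁} {u} := by rwa [Set.pair_comm]
    have hR4''' : ∀ x ∈ R4, x ∉ ({v₂, v₁} : Set V) := by
      intro x hx; rw [Set.pair_comm]; exact hR4'' x hx
    have hR1''' : ∀ x ∈ R1, x ∉ ({v₄, v₃} : Set V) := by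
      intro x hx; rw [Set.pair_comm]; exact hR1'' x hx
    have := key E root u v₄ v₃ v₂ v₁ hab' hcd' hnb R4 hR4 hR4''' R1 hR1 hR1'''
    rwa [Set.pair_comm] at this
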